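/- Let G be a connected graph with a sign function σ : E(G) → ℤ/2ℤ, and suppose G is unbalanced (contains a cycle of odd total sign). Then the collection I = {F ⊆ E(G) : every connected component of G ∖ F is unbalanced} is the collection of independent sets of a matroid on the ground set E(G), and the rank of this matroid equals |E(G)| − |V(G)|. (Here G ∖ F denotes deletion of the edges in F, keeping all vertices.) -/

import Mathlib

open scoped Classical

structure HGraph where
  V : Type
  H : Type
  [fintV : Fintype V]
  [fintH : Fintype H]
  [decV : DecidableEq V]
  [decH : DecidableEq H]
  root : H → V
  inv : H → H
  inv_inv : ∀ h, inv (inv h) = h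
  inv_ne : ∀ h, inv h ≠ h

attribute [instance] HGraph.fintV HGraph.fintH HGraph.decV HGraph.decH

namespace HGraph

variable (G : HGraph)

/-- The setoid on half-edges whose classes are the edges. -/
def edgeSetoid : Setoid G.H where
  r h h' := h' = h ∨ h' = G.inv h
  iseqv := by
    refine ⟨fun h => Or.inl rfl, ?_, ?_⟩
    · rintro a b (rfl | rfl)
      · exact Or.inl rfl
      · exact Or.inr (G.inv_inv a).symm
    · rintro a b c (rfl | rfl) hbc
      · exact hbc
      · rcases hbc with rfl | rfl
        · exact Or.inr rfl
        · exact Or.inl (G.inv_inv a)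

instance edgeDec : DecidableRel G.edgeSetoid.r := fun _ _ => instDecidableOr

/-- The edges of a graph: orbits of the involution on half-edges. -/
def Edge := Quotient G.edgeSetoid

instance : Fintype G.Edge := @Quotient.fintype _ _ G.edgeSetoid G.edgeDec
instance : DecidableEq G.Edge := @Quotient.decidableEq _ G.edgeSetoid G.edgeDec

/-- The edge underlying a half-edge. -/
def edge (h : G.H) : G.Edge := Quotient.mk G.edgeSetoid h

lemma edge_inv (h : G.H) : G.edge (G.inv h) = G.edge h :=
  Quotient.sound (Or.inr (G.inv_inv h).symm)

/-- The valence of a vertex: the number of half-edges rooted at it. -/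
def val (v : G.V) : ℕ := (Finset.univ.filter fun h => G.root h = v).card

/-- Two vertices are adjacent through an edge belonging to `S`. -/
def adjOn (S : Finset G.Edge) (v w : G.V) : Prop :=
  ∃ h, G.edge h ∈ S ∧ G.root h = v ∧ G.root (G.inv h) = w

/-- The spanning subgraph with edge set `S` is connected. -/
def ConnectedOn (S : Finset G.Edge) : Prop :=
  ∀ v w : G.V, Relation.ReflTransGen (G.adjOn S) v w

/-- The graph is connected. -/
def Connected : Prop := Nonempty G.V ∧ G.ConnectedOn Finset.univ

/-- Euler characteristic of a vertex, for a genus function `gV`. -/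
def chiZ (gV : G.V → ℤ) (v : G.V) : ℤ := 2 - 2 * gV v - G.val v

/-- The genus of a (connected) weighted graph. -/
def genusZ (gV : G.V → ℤ) : ℤ :=
  (Fintype.card G.Edge : ℤ) - Fintype.card G.V + 1 + ∑ v, gV v

/-- The number of connected components of the spanning subgraph with edge set `S`. -/
noncomputable def ncomp (S : Finset G.Edge) : ℕ :=
  Nat.card (Quotient (Relation.EqvGen.setoid (G.adjOn S)))

end HGraph

/-- A harmonic morphism of graphs: a graph morphism together with local degrees. -/
structure HarmonicTo (Gt G : HGraph) where
  fV : Gt.V → G.V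
  fH : Gt.H → G.H
  root_comm : ∀ h, G.root (fH h) = fV (Gt.root h)
  inv_comm : ∀ h, fH (Gt.inv h) = G.inv (fH h)
  dV : Gt.V → ℕ
  dH : Gt.H → ℕ
  dV_pos : ∀ v, 0 < dV v
  dH_pos : ∀ h, 0 < dH h
  dH_inv : ∀ h, dH (Gt.inv h) = dH h
  harm : ∀ (w : Gt.V) (h : G.H), G.root h = fV w →
    dV w = ∑ x ∈ Finset.univ.filter (fun x => Gt.root x = w ∧ fH x = h), dH x

namespace HarmonicTo

variable {Gt G : HGraph} (f : HarmonicTo Gt G)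

/-- The induced map on edges. -/
def fE : Gt.Edge → G.Edge :=
  Quotient.lift (fun h => G.edge (f.fH h)) (by
    rintro a b (rfl | rfl)
    · rfl
    · show G.edge (f.fH a) = G.edge (f.fH (Gt.inv a))
      rw [f.inv_comm]
      exact (G.edge_inv _).symm)

/-- The local degree of an edge. -/
def dE : Gt.Edge → ℕ :=
  Quotient.lift f.dH (by
    rintro a b (rfl | rfl)
    · rfl
    · exact (f.dH_inv a).symm)

/-- The ramification degree at a vertex of the source. -/
def Ram (gVt : Gt.V → ℤ) (gV : G.V → ℤ) (w : Gt.V) : ℤ :=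
  (f.dV w : ℤ) * G.chiZ gV (f.fV w) - Gt.chiZ gVt w

end HarmonicTo

namespace HGraph

/-- A cycle contained in a set of edges `S`: a closed walk with pairwise distinct edges and
pairwise distinct vertices, all of whose edges belong to `S`. -/
def IsCycleIn (G : HGraph) (S : Set G.Edge) {n : ℕ} (c : Fin (n + 1) → G.H) : Prop :=
  (∀ i, G.edge (c i) ∈ S) ∧
  (∀ i, G.root (G.inv (c i)) = G.root (c (i + 1))) ∧
  (Function.Injective fun i => G.edge (c i)) ∧
  (Function.Injective fun i => G.root (c i))

/-- A signed graph is unbalanced if it contains a cycle of odd total sign. -/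
def Unbal (G : HGraph) (σ : G.Edge → ZMod 2) : Prop :=
  ∃ (n : ℕ) (c : Fin (n + 1) → G.H),
    G.IsCycleIn Set.univ c ∧ (∑ i, σ (G.edge (c i))) = 1

/-- Every connected component of the graph obtained from `G` by deleting the edges in `F` is
unbalanced: every vertex can reach, through edges not in `F`, the base point of a cycle of odd
total sign avoiding `F`. -/
def DelUnbal (G : HGraph) (σ : G.Edge → ZMod 2) (F : Finset G.Edge) : Prop :=
  ∀ v : G.V, ∃ (n : ℕ) (c : Fin (n + 1) → G.H),
    G.IsCycleIn {e | e ∉ F} c ∧ (∑ i, σ (G.edge (c i))) = 1 ∧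
    Relation.ReflTransGen (G.adjOn Fᶜ) v (G.root (c 0))

/-- A Prym basis: a set `B` of `|V(G)|` edges such that every connected component of the
spanning subgraph `(V(G), B)` is unbalanced. -/
def PrymBasis (G : HGraph) (σ : G.Edge → ZMod 2) (B : Finset G.Edge) : Prop :=
  B.card = Fintype.card G.V ∧
  ∀ v : G.V, ∃ (n : ℕ) (c : Fin (n + 1) → G.H),
    G.IsCycleIn {e | e ∈ B} c ∧ (∑ i, σ (G.edge (c i))) = 1 ∧
    Relation.ReflTransGen (G.adjOn B) v (G.root (c 0))

/-- The free double cover associated to a signed graph. -/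
def cover (G : HGraph) (σ : G.Edge → ZMod 2) : HGraph where
  V := G.V × ZMod 2
  H := G.H × ZMod 2
  root p := (G.root p.1, p.2)
  inv p := (G.inv p.1, p.2 + σ (G.edge p.1))
  inv_inv := by
    intro p
    have h2 : ∀ a : ZMod 2, a + a = 0 := by decide
    ext
    · exact G.inv_inv p.1
    · show p.2 + σ (G.edge p.1) + σ (G.edge (G.inv p.1)) = p.2
      rw [G.edge_inv, add_assoc, h2, add_zero]
  inv_ne := by
    intro p hp
    exact G.inv_ne p.1 (congrArg Prod.fst hp)

end HGraph


section SignedAux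

open Submodule Module

noncomputable def eps (s : ZMod 2) : ℚ := if s = 0 then 1 else -1

lemma zmod2_cases : ∀ s : ZMod 2, s = 0 ∨ s = 1 := by decide

lemma eps_zero : eps 0 = 1 := by simp [eps]
lemma eps_one : eps 1 = -1 := by norm_num [eps]
lemma eps_add (s t : ZMod 2) : eps (s + t) = eps s * eps t := by
  rcases zmod2_cases s with rfl | rfl <;> rcases zmod2_cases t with rfl | rfl <;>
    norm_num [eps] <;> decide
lemma eps_mul_self (s : ZMod 2) : eps s * eps s = 1 := by
  rcases zmod2_cases s with rfl | rfl <;> norm_num [eps]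
lemma eps_sum {ι : Type*} (f : ι → ZMod 2) (s : Finset ι) :
    eps (∑ i ∈ s, f i) = ∏ i ∈ s, eps (f i) := by
  classical
  induction s using Finset.cons_induction with
  | empty => simp [eps_zero]
  | cons a s ha ih => rw [Finset.sum_cons, Finset.prod_cons, eps_add, ih]

variable (G : HGraph) (σ : G.Edge → ZMod 2)

noncomputable def rep (e : G.Edge) : G.H := Quotient.out e

lemma edge_rep (e : G.Edge) : G.edge (rep G e) = e := Quotient.out_eq e

noncomputable def chi (v : G.V) : G.V → ℚ := Pi.single v 1

noncomputable def wvec (h : G.H) : G.V → ℚ :=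
  chi G (G.root h) - eps (σ (G.edge h)) • chi G (G.root (G.inv h))

noncomputable def phi (e : G.Edge) : G.V → ℚ := wvec G σ (rep G e)

lemma wvec_inv (h : G.H) :
    wvec G σ (G.inv h) = (-eps (σ (G.edge h))) • wvec G σ h := by
  have h2 := eps_mul_self (σ (G.edge h))
  unfold wvec
  rw [G.edge_inv, G.inv_inv, neg_smul, smul_sub, smul_smul, h2, one_smul, neg_sub]

lemma wvec_mem_span {S : Set G.Edge} {h : G.H} (hh : G.edge h ∈ S) :
    wvec G σ h ∈ span ℚ (phi G σ '' S) := by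
  have hout : h = rep G (G.edge h) ∨ h = G.inv (rep G (G.edge h)) :=
    Quotient.mk_out (s := G.edgeSetoid) h
  have hphi : phi G σ (G.edge h) ∈ span ℚ (phi G σ '' S) :=
    subset_span ⟨_, hh, rfl⟩
  rcases hout with h1 | h1
  · have : phi G σ (G.edge h) = wvec G σ h := by rw [phi, ← h1]
    rwa [this] at hphi
  · have h2 : wvec G σ h = (-eps (σ (G.edge h))) • phi G σ (G.edge h) := by
      conv_lhs => rw [h1]
      rw [phi, wvec_inv, edge_rep]
    rw [h2]
    exact smul_mem _ _ hphi

lemma chi_root_mem {S : Set G.Edge} {h : G.H} (hh : G.edge h ∈ S)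
    (hmem : chi G (G.root (G.inv h)) ∈ span ℚ (phi G σ '' S)) :
    chi G (G.root h) ∈ span ℚ (phi G σ '' S) := by
  have h1 := wvec_mem_span G σ hh
  have heq : chi G (G.root h)
      = wvec G σ h + eps (σ (G.edge h)) • chi G (G.root (G.inv h)) := by
    rw [wvec]; abel
  rw [heq]
  exact add_mem h1 (smul_mem _ _ hmem)

lemma chi_root_inv_mem {S : Set G.Edge} {h : G.H} (hh : G.edge h ∈ S)
    (hmem : chi G (G.root h) ∈ span ℚ (phi G σ '' S)) :
    chi G (G.root (G.inv h)) ∈ span ℚ (phi G σ '' S) := by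
  have hh' : G.edge (G.inv h) ∈ S := by rwa [G.edge_inv]
  have := chi_root_mem G σ hh' (by rwa [G.inv_inv])
  exact this

open Fin.NatCast in
lemma chi_mem_of_cycle {S : Set G.Edge} {n : ℕ} {c : Fin (n+1) → G.H}
    (hc : G.IsCycleIn S c) (hs : (∑ i, σ (G.edge (c i))) = 1) :
    chi G (G.root (c 0)) ∈ span ℚ (phi G σ '' S) := by
  set sp := span ℚ (phi G σ '' S) with hsp
  have key : ∀ k : ℕ, k ≤ n + 1 →
      chi G (G.root (c 0)) -
        (∏ j ∈ Finset.range k, eps (σ (G.edge (c j)))) • chi G (G.root (c k)) ∈ sp := by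
    intro k
    induction k with
    | zero =>
      intro _
      simpa using (zero_mem sp)
    | succ k ih =>
      intro hk
      have prev := ih (by omega)
      have hw := wvec_mem_span G σ (S := S) (h := c k) (hc.1 _)
      have hchain := hc.2.1 (k : Fin (n+1))
      have hcast : ((k : Fin (n+1)) + 1) = ((k+1 : ℕ) : Fin (n+1)) := by push_cast; ring
      have hcomb := add_mem prev
        (smul_mem sp (∏ j ∈ Finset.range k, eps (σ (G.edge (c j)))) hw)
      have heq : chi G (G.root (c 0)) -
            (∏ j ∈ Finset.range k, eps (σ (G.edge (c j)))) • chi G (G.root (c k)) +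
            (∏ j ∈ Finset.range k, eps (σ (G.edge (c j)))) • wvec G σ (c k)
          = chi G (G.root (c 0)) -
            (∏ j ∈ Finset.range (k+1), eps (σ (G.edge (c j)))) • chi G (G.root (c (k+1))) := by
        rw [wvec, hchain, hcast, Finset.prod_range_succ, smul_sub, smul_smul]
        abel
      rw [heq] at hcomb
      rwa [hcast] at hcomb
  have final := key (n+1) le_rfl
  rw [show ((n+1 : ℕ) : Fin (n+1)) = 0 from by simp] at final
  have hprod : (∏ j ∈ Finset.range (n+1), eps (σ (G.edge (c j)))) = -1 := by
    rw [← eps_sum]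
    have hsum2 : (∑ j ∈ Finset.range (n+1), σ (G.edge (c j)))
        = ∑ i : Fin (n+1), σ (G.edge (c i)) := by
      rw [← Fin.sum_univ_eq_sum_range (fun j : ℕ => σ (G.edge (c j))) (n+1)]
      apply Finset.sum_congr rfl
      intro i _
      congr 2
      exact congrArg c (Fin.cast_val_eq_self i)
    rw [hsum2, hs, eps_one]
  rw [hprod] at final
  have h2 : chi G (G.root (c 0)) = (2⁻¹ : ℚ) •
      (chi G (G.root (c 0)) - (-1 : ℚ) • chi G (G.root (c 0))) := by
    rw [neg_smul, one_smul, sub_neg_eq_add, ← two_smul ℚ, smul_smul]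
    norm_num
  rw [h2]
  exact smul_mem _ _ final

lemma chi_reach (F : Finset G.Edge) {a b : G.V}
    (hreach : Relation.ReflTransGen (G.adjOn Fᶜ) a b)
    (hb : chi G b ∈ span ℚ (phi G σ '' {e | e ∉ F})) :
    chi G a ∈ span ℚ (phi G σ '' {e | e ∉ F}) := by
  induction hreach using Relation.ReflTransGen.head_induction_on with
  | refl => exact hb
  | head hstep _ ih =>
    obtain ⟨hh, hmem, hroot, hroot'⟩ := hstep
    have hmem' : G.edge hh ∈ {e | e ∉ F} := by simpa using hmem
    have := chi_root_mem G σ hmem' (by rw [hroot']; exact ih)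
    rwa [hroot] at this

lemma span_top_of_delUnbal (F : Finset G.Edge) (h : G.DelUnbal σ F) :
    span ℚ (phi G σ '' {e | e ∉ F}) = ⊤ := by
  have hchi : ∀ v, chi G v ∈ span ℚ (phi G σ '' {e | e ∉ F}) := by
    intro v
    obtain ⟨n, c, hc, hs, hreach⟩ := h v
    exact chi_reach G σ F hreach (chi_mem_of_cycle G σ hc hs)
  rw [eq_top_iff]
  intro x _
  have hx : x = ∑ v, x v • chi G v := by
    conv_lhs => rw [← Finset.univ_sum_single x]
    apply Finset.sum_congr rfl
    intro v _
    rw [chi, ← Pi.single_smul, smul_eq_mul, mul_one]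
  rw [hx]
  exact sum_mem fun v _ => smul_mem _ _ (hchi v)

lemma zmod2_aa : ∀ a : ZMod 2, a + a = 0 := by decide
lemma zmod2_cancel : ∀ x a b : ZMod 2, x + a + (a + b) = x + b := by decide
lemma zmod2_rev : ∀ x a b c : ZMod 2, x + a + b + c + a = x + c + b := by decide
lemma zmod2_or : ∀ a b : ZMod 2, a + b = 1 → a = 1 ∨ b = 1 := by decide

variable (F : Finset G.Edge)

/-- A walk of length `m` (a list of `m` half-edges), avoiding `F`. -/
def Wk (c : ℕ → G.H) (m : ℕ) : Prop :=
  (∀ i < m, G.edge (c i) ∉ F) ∧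
  ∀ i, i + 1 < m → G.root (G.inv (c i)) = G.root (c (i+1))

/-- One step in the double cover determined by `σ`, avoiding `F`. -/
def Step (p q : G.V × ZMod 2) : Prop :=
  ∃ h : G.H, G.edge h ∉ F ∧ G.root h = p.1 ∧ G.root (G.inv h) = q.1 ∧
    q.2 = p.2 + σ (G.edge h)

abbrev Rch := Relation.ReflTransGen (Step G σ F)

lemma step_symm {p q : G.V × ZMod 2} (h : Step G σ F p q) (x : ZMod 2) :
    Step G σ F (q.1, x) (p.1, x + p.2 + q.2) := by
  obtain ⟨e, he, h1, h2, h3⟩ := h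
  refine ⟨G.inv e, by rwa [G.edge_inv], h2, by rw [G.inv_inv]; exact h1, ?_⟩
  rw [G.edge_inv, h3]
  show x + p.2 + (p.2 + σ (G.edge e)) = x + σ (G.edge e)
  rw [zmod2_cancel]

lemma rch_rev {p q : G.V × ZMod 2} (h : Rch G σ F p q) :
    ∀ x, Rch G σ F (q.1, x) (p.1, x + p.2 + q.2) := by
  induction h with
  | refl =>
    intro x
    have : x + p.2 + p.2 = x := by rw [add_assoc, zmod2_aa, add_zero]
    rw [this]
  | @tail b q hpb hbq ih =>
    intro x
    have s1 : Step G σ F (q.1, x) (b.1, x + b.2 + q.2) := step_symm G σ F hbq x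
    have s2 := ih (x + b.2 + q.2)
    have heq : x + b.2 + q.2 + p.2 + b.2 = x + p.2 + q.2 := zmod2_rev x b.2 q.2 p.2
    rw [heq] at s2
    exact Relation.ReflTransGen.head s1 s2

lemma reach_exists_rch {a b : G.V} (h : Relation.ReflTransGen (G.adjOn Fᶜ) a b) :
    ∃ s, Rch G σ F (a, 0) (b, s) := by
  induction h with
  | refl => exact ⟨0, Relation.ReflTransGen.refl⟩
  | @tail b' b hab hstep ih =>
    obtain ⟨s, hs⟩ := ih
    obtain ⟨e, he, h1, h2⟩ := hstep
    exact ⟨s + σ (G.edge e), hs.tail ⟨e, by simpa using he, h1, h2, rfl⟩⟩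

lemma rch_proj {p q : G.V × ZMod 2} (h : Rch G σ F p q) :
    Relation.ReflTransGen (G.adjOn Fᶜ) p.1 q.1 := by
  induction h with
  | refl => exact Relation.ReflTransGen.refl
  | @tail b' b hab hstep ih =>
    obtain ⟨e, he, h1, h2, _⟩ := hstep
    exact ih.tail ⟨e, by simpa using he, h1, h2⟩

lemma rch_to_walk {p q : G.V × ZMod 2} (h : Rch G σ F p q) :
    p = q ∨ ∃ m, 0 < m ∧ ∃ c : ℕ → G.H, Wk G F c m ∧ G.root (c 0) = p.1 ∧
      G.root (G.inv (c (m-1))) = q.1 ∧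
      q.2 = p.2 + ∑ i ∈ Finset.range m, σ (G.edge (c i)) := by
  induction h with
  | refl => exact Or.inl rfl
  | @tail b q hab hstep ih =>
    right
    obtain ⟨e, he, h1, h2, h3⟩ := hstep
    rcases ih with rfl | ⟨m, hm, c, hw, hc0, hcend, hsum⟩
    · refine ⟨1, one_pos, fun _ => e, ⟨fun i _ => he, fun i h => by omega⟩, h1, h2, ?_⟩
      rw [Finset.sum_range_one, h3]
    · refine ⟨m + 1, by omega, fun i => if i < m then c i else e, ⟨?_, ?_⟩, ?_, ?_, ?_⟩
      · intro i _
        by_cases hi : i < m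
        · simpa [hi] using hw.1 i hi
        · simpa [hi] using he
      · intro i hi
        by_cases hi1 : i + 1 < m
        · have hi0 : i < m := by omega
          simpa [hi0, hi1] using hw.2 i hi1
        · have hi0 : i + 1 = m := by omega
          have hil : i < m := by omega
          have : G.root (G.inv (c i)) = G.root e := by
            have := hcend
            rw [show m - 1 = i from by omega] at this
            rw [this, h1]
          simpa [hil, hi1] using this
      · have h0 : (0 : ℕ) < m := hm
        simpa [h0] using hc0
      · simp [h2]
      · rw [Finset.sum_range_succ]
        have hcongr : ∑ i ∈ Finset.range m,
            σ (G.edge (if i < m then c i else e)) = ∑ i ∈ Finset.range m, σ (G.edge (c i)) := by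
          apply Finset.sum_congr rfl
          intro i hi
          rw [if_pos (Finset.mem_range.mp hi)]
        rw [hcongr, show (fun i => if i < m then c i else e) m = e from by simp,
          h3, hsum, add_assoc]

lemma walk_reach {c : ℕ → G.H} {m : ℕ} (hw : Wk G F c m) :
    ∀ i < m, Relation.ReflTransGen (G.adjOn Fᶜ) (G.root (c 0)) (G.root (c i)) := by
  intro i
  induction i with
  | zero => intro _; exact Relation.ReflTransGen.refl
  | succ i ih =>
    intro hi
    exact (ih (by omega)).tail
      ⟨c i, by simpa using hw.1 i (by omega), rfl, hw.2 i hi⟩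

lemma exists_cycle_of_closed_walk (v : G.V)
    (hex : ∃ m, 0 < m ∧ ∃ c : ℕ → G.H, Wk G F c m ∧
      Relation.ReflTransGen (G.adjOn Fᶜ) v (G.root (c 0)) ∧
      G.root (G.inv (c (m-1))) = G.root (c 0) ∧
      (∑ i ∈ Finset.range m, σ (G.edge (c i))) = 1) :
    ∃ (n : ℕ) (c : Fin (n + 1) → G.H),
      G.IsCycleIn {e | e ∉ F} c ∧ (∑ i, σ (G.edge (c i))) = 1 ∧
      Relation.ReflTransGen (G.adjOn Fᶜ) v (G.root (c 0)) := by
  classical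
  obtain ⟨hm0, c, hw, hreach, hclose, hsum⟩ := Nat.find_spec hex
  set m₀ := Nat.find hex with hm0def
  have hdist : ∀ i j, i < j → j < m₀ → G.root (c i) ≠ G.root (c j) := by
    intro i j hij hj heq
    have hw1 : Wk G F (fun k => c (i + k)) (j - i) := by
      constructor
      · intro k hk
        exact hw.1 (i + k) (by omega)
      · intro k hk
        show G.root (G.inv (c (i + k))) = G.root (c (i + (k+1)))
        rw [show i + (k+1) = (i + k) + 1 from by omega]
        exact hw.2 (i + k) (by omega)
    have htot : (∑ k ∈ Finset.range i, σ (G.edge (c k)))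
        + ((∑ k ∈ Finset.range (j - i), σ (G.edge (c (i + k))))
        + (∑ k ∈ Finset.range (m₀ - j), σ (G.edge (c (j + k))))) = 1 := by
      have e1 : m₀ = i + ((j - i) + (m₀ - j)) := by omega
      rw [e1] at hsum
      rw [Finset.sum_range_add, Finset.sum_range_add] at hsum
      rw [← hsum]
      congr 2
      · apply Finset.sum_congr rfl
        intro k _
        rw [show i + (j - i + k) = j + k from by omega]
    set c₂ : ℕ → G.H := fun k => if k < m₀ - j then c (j + k) else c (k - (m₀ - j))
      with hc2def
    have hw2 : Wk G F c₂ (m₀ - j + i) := by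
      constructor
      · intro k hk
        by_cases hcase : k < m₀ - j
        · show G.edge (if k < m₀ - j then c (j + k) else c (k - (m₀ - j))) ∉ F
          rw [if_pos hcase]
          exact hw.1 (j + k) (by omega)
        · show G.edge (if k < m₀ - j then c (j + k) else c (k - (m₀ - j))) ∉ F
          rw [if_neg hcase]
          exact hw.1 (k - (m₀ - j)) (by omega)
      · intro k hk
        show G.root (G.inv (c₂ k)) = G.root (c₂ (k+1))
        rcases Nat.lt_trichotomy (k+1) (m₀ - j) with h1 | h1 | h1
        · rw [show c₂ k = c (j + k) from by rw [hc2def]; simp only []; rw [if_pos (by omega)]]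
          rw [show c₂ (k+1) = c (j + (k+1)) from by rw [hc2def]; simp only []; rw [if_pos h1]]
          rw [show j + (k+1) = (j + k) + 1 from by omega]
          exact hw.2 (j + k) (by omega)
        · rw [show c₂ k = c (m₀ - 1) from by
            rw [hc2def]; simp only []; rw [if_pos (by omega), show j + k = m₀ - 1 from by omega]]
          rw [show c₂ (k+1) = c 0 from by
            rw [hc2def]; simp only []; rw [if_neg (by omega), show k + 1 - (m₀ - j) = 0 from by omega]]
          exact hclose
        · rw [show c₂ k = c (k - (m₀ - j)) from by rw [hc2def]; simp only []; rw [if_neg (by omega)]]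
          rw [show c₂ (k+1) = c ((k - (m₀ - j)) + 1) from by
            rw [hc2def]; simp only []; rw [if_neg (by omega), show k + 1 - (m₀ - j) = (k - (m₀ - j)) + 1 from by omega]]
          exact hw.2 (k - (m₀ - j)) (by omega)
    have hsum2 : (∑ k ∈ Finset.range (m₀ - j + i), σ (G.edge (c₂ k)))
        = (∑ k ∈ Finset.range (m₀ - j), σ (G.edge (c (j + k))))
        + (∑ k ∈ Finset.range i, σ (G.edge (c k))) := by
      rw [Finset.sum_range_add]
      congr 1
      · apply Finset.sum_congr rfl
        intro k hk
        have hk' := Finset.mem_range.mp hk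
        rw [show c₂ k = c (j + k) from by rw [hc2def]; simp only []; rw [if_pos hk']]
      · apply Finset.sum_congr rfl
        intro k _
        rw [show c₂ (m₀ - j + k) = c k from by
          rw [hc2def]; simp only []; rw [if_neg (by omega), show m₀ - j + k - (m₀ - j) = k from by omega]]
    have hboth : (∑ k ∈ Finset.range (j - i), σ (G.edge (c (i + k))))
        + (∑ k ∈ Finset.range (m₀ - j + i), σ (G.edge (c₂ k))) = 1 := by
      rw [hsum2]
      linear_combination htot
    rcases zmod2_or _ _ hboth with hodd | hodd
    · refine Nat.find_min hex (show j - i < m₀ from by omega) ⟨by omega, fun k => c (i + k), hw1, ?_, ?_, hodd⟩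
      · show Relation.ReflTransGen (G.adjOn Fᶜ) v (G.root (c (i + 0)))
        rw [show i + 0 = i from by omega]
        exact hreach.trans (walk_reach G F hw i (by omega))
      · show G.root (G.inv (c (i + (j - i - 1)))) = G.root (c (i + 0))
        rw [show i + (j - i - 1) = j - 1 from by omega, show i + 0 = i from by omega]
        have := hw.2 (j-1) (by omega)
        rw [show j - 1 + 1 = j from by omega] at this
        rw [this, ← heq]
    · refine Nat.find_min hex (show m₀ - j + i < m₀ from by omega)
        ⟨by omega, c₂, hw2, ?_, ?_, hodd⟩
      · have hbase : c₂ 0 = c j := by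
          rw [hc2def]; simp only []; rw [if_pos (by omega), Nat.add_zero]
        rw [hbase]
        exact hreach.trans (walk_reach G F hw j (by omega))
      · have hbase : c₂ 0 = c j := by
          rw [hc2def]; simp only []; rw [if_pos (by omega), Nat.add_zero]
        rw [hbase]
        by_cases hi0 : i = 0
        · rw [show c₂ (m₀ - j + i - 1) = c (m₀ - 1) from by
            rw [hc2def]; simp only []; rw [if_pos (by omega), show j + (m₀ - j + i - 1) = m₀ - 1 from by omega]]
          rw [hclose, ← heq, hi0]
        · rw [show c₂ (m₀ - j + i - 1) = c (i - 1) from by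
            rw [hc2def]; simp only []; rw [if_neg (by omega), show m₀ - j + i - 1 - (m₀ - j) = i - 1 from by omega]]
          have := hw.2 (i-1) (by omega)
          rw [show i - 1 + 1 = i from by omega] at this
          rw [this, heq]
  -- now build the injective cycle
  obtain ⟨n, hn⟩ : ∃ n, m₀ = n + 1 := ⟨m₀ - 1, by omega⟩
  have hchain' : ∀ i : Fin (n+1), G.root (G.inv (c i.val)) = G.root (c ((i+1) : Fin (n+1)).val) := by
    intro i
    by_cases hlast : i = Fin.last n
    · have h1 : ((i + 1 : Fin (n+1))).val = 0 := by rw [Fin.val_add_one, if_pos hlast]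
      rw [h1]
      have h2 : i.val = n := by rw [hlast, Fin.val_last]
      rw [h2, show n = m₀ - 1 from by omega]
      exact hclose
    · have h1 : ((i + 1 : Fin (n+1))).val = i.val + 1 := by rw [Fin.val_add_one, if_neg hlast]
      rw [h1]
      exact hw.2 i.val (by have := Fin.val_lt_last hlast; omega)
  have rinj : ∀ i j : Fin (n+1), G.root (c i.val) = G.root (c j.val) → i = j := by
    intro i j heq
    rcases Nat.lt_trichotomy i.val j.val with h | h | h
    · exact absurd heq (hdist i.val j.val h (by have := j.isLt; omega))
    · exact Fin.ext h
    · exact absurd heq.symm (hdist j.val i.val h (by have := i.isLt; omega))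
  have hsF : (∑ k : Fin (n+1), σ (G.edge (c k.val))) = 1 := by
    have := Fin.sum_univ_eq_sum_range (fun k : ℕ => σ (G.edge (c k))) (n+1)
    rw [this, show n + 1 = m₀ from by omega]
    exact hsum
  have einj : ∀ i j : Fin (n+1), G.edge (c i.val) = G.edge (c j.val) → i = j := by
    intro i j hij
    have hrel : c j.val = c i.val ∨ c j.val = G.inv (c i.val) := Quotient.exact hij
    rcases hrel with h | h
    · exact rinj i j (by rw [h])
    · have hji : j = i + 1 := by
        apply rinj
        rw [h, hchain' i]
      have hij2 : j + 1 = i := by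
        apply rinj
        rw [← hchain' j, h, G.inv_inv]
      by_cases hn0 : n = 0
      · subst hn0
        have hij' : i = j := Fin.ext (by have := i.isLt; have := j.isLt; omega)
        rw [hij'] at h
        exact absurd h.symm (G.inv_ne _)
      · by_cases hn1 : n = 1
        · subst hn1
          have hne : i ≠ j := by
            intro hcontra
            rw [← hcontra] at hji
            have : (1 : Fin 2) = 0 := by
              have := left_eq_add.mp hji
              exact this
            exact absurd this (by decide)
          have huniv : (Finset.univ : Finset (Fin 2)) = {i, j} :=
            (Finset.eq_univ_of_card _ (by rw [Finset.card_pair hne]; rfl)).symm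
          rw [huniv, Finset.sum_pair hne] at hsF
          have hedge : G.edge (c j.val) = G.edge (c i.val) := by rw [h, G.edge_inv]
          rw [hedge, zmod2_aa] at hsF
          exact absurd hsF (by decide)
        · exfalso
          have hv1 : ((i + 1 : Fin (n+1))).val = if i = Fin.last n then 0 else i.val + 1 :=
            Fin.val_add_one i
          have hv2 : ((j + 1 : Fin (n+1))).val = if j = Fin.last n then 0 else j.val + 1 :=
            Fin.val_add_one j
          have hj := congrArg Fin.val hji
          have hi := congrArg Fin.val hij2
          rw [hv1] at hj
          rw [hv2] at hi
          have hlastv : (Fin.last n).val = n := rfl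
          by_cases c1 : i = Fin.last n
          · rw [if_pos c1] at hj
            have hiv : i.val = n := by rw [c1, Fin.val_last]
            by_cases c2 : j = Fin.last n
            · rw [if_pos c2] at hi
              have hjv : j.val = n := by rw [c2, Fin.val_last]
              omega
            · rw [if_neg c2] at hi
              omega
          · rw [if_neg c1] at hj
            by_cases c2 : j = Fin.last n
            · rw [if_pos c2] at hi
              have hjv : j.val = n := by rw [c2, Fin.val_last]
              omega
            · rw [if_neg c2] at hi
              omega
  refine ⟨n, fun k => c k.val, ⟨fun i => hw.1 i.val (by have := i.isLt; omega),
    fun i => hchain' i, fun i j hij => einj i j hij, fun i j hij => rinj i j hij⟩,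
    hsF, hreach⟩

lemma delUnbal_of_span_top
    (hspan : span ℚ (phi G σ '' {e | e ∉ F}) = ⊤) : G.DelUnbal σ F := by
  intro v
  by_contra hno
  have hnoloop : ∀ u : G.V, Relation.ReflTransGen (G.adjOn Fᶜ) v u →
      ¬ Rch G σ F (u, 0) (u, 1) := by
    intro u hu hloop
    rcases rch_to_walk G σ F hloop with heq | ⟨m, hm, c, hwk, h0, hend, hs⟩
    · exact absurd (congrArg Prod.snd heq) (show ¬ ((0:ZMod 2) = 1) from by decide)
    · apply hno
      apply exists_cycle_of_closed_walk G σ F v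
      refine ⟨m, hm, c, hwk, ?_, by rw [hend, h0], ?_⟩
      · rw [h0]
        exact hu
      · rw [zero_add] at hs
        exact hs.symm
  classical
  set θ : G.V → ℚ := fun u =>
    if Rch G σ F (v, 0) (u, 0) then 1 else if Rch G σ F (v, 0) (u, 1) then -1 else 0
    with hθ
  have huniq : ∀ u s t, Rch G σ F (v, 0) (u, s) → Rch G σ F (v, 0) (u, t) → s = t := by
    intro u s t h1 h2
    by_contra hne
    have hst : s + t = 1 := by
      rcases zmod2_cases s with rfl | rfl <;> rcases zmod2_cases t with rfl | rfl
      · exact absurd rfl hne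
      · decide
      · decide
      · exact absurd rfl hne
    have h3 := rch_rev G σ F h2 s
    rw [show s + ((v, (0 : ZMod 2)).2) + ((u, t).2) = 1 from by
      show s + 0 + t = 1; rw [add_zero]; exact hst] at h3
    exact hnoloop v Relation.ReflTransGen.refl (h1.trans h3)
  have hspec : ∀ u s, Rch G σ F (v, 0) (u, s) → θ u = eps s := by
    intro u s h
    rcases zmod2_cases s with rfl | rfl
    · rw [hθ]
      simp only []
      rw [if_pos h, eps_zero]
    · have hnot : ¬ Rch G σ F (v, 0) (u, 0) := by
        intro h'
        exact absurd (huniq u 0 1 h' h) (by decide)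
      rw [hθ]
      simp only []
      rw [if_neg hnot, if_pos h, eps_one]
  have horth : ∀ e : G.H, G.edge e ∉ F →
      θ (G.root e) = eps (σ (G.edge e)) * θ (G.root (G.inv e)) := by
    intro e he
    by_cases hex1 : ∃ s, Rch G σ F (v, 0) (G.root e, s)
    · obtain ⟨s, hs⟩ := hex1
      have hstep : Step G σ F (G.root e, s) (G.root (G.inv e), s + σ (G.edge e)) :=
        ⟨e, he, rfl, rfl, rfl⟩
      have h2 : Rch G σ F (v, 0) (G.root (G.inv e), s + σ (G.edge e)) := hs.tail hstep
      rw [hspec _ _ hs, hspec _ _ h2, eps_add]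
      rw [show eps (σ (G.edge e)) * (eps s * eps (σ (G.edge e)))
          = eps s * (eps (σ (G.edge e)) * eps (σ (G.edge e))) from by ring,
        eps_mul_self, mul_one]
    · have h0 : θ (G.root e) = 0 := by
        rw [hθ]
        simp only []
        rw [if_neg (fun hc => hex1 ⟨0, hc⟩), if_neg (fun hc => hex1 ⟨1, hc⟩)]
      have hnone : ∀ t, ¬ Rch G σ F (v, 0) (G.root (G.inv e), t) := by
        intro t hc
        apply hex1
        refine ⟨t + σ (G.edge e), hc.tail ⟨G.inv e, ?_, rfl, ?_, ?_⟩⟩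
        · rwa [G.edge_inv]
        · rw [G.inv_inv]
        · rw [G.edge_inv]
      have h0' : θ (G.root (G.inv e)) = 0 := by
        rw [hθ]
        simp only []
        rw [if_neg (hnone 0), if_neg (hnone 1)]
      rw [h0, h0', mul_zero]
  have hθv : θ v = 1 := by
    rw [hθ]
    simp only []
    rw [if_pos Relation.ReflTransGen.refl]
  set L : (G.V → ℚ) →ₗ[ℚ] ℚ :=
    { toFun := fun x => ∑ u, θ u * x u
      map_add' := by
        intro x y
        simp [mul_add, Finset.sum_add_distrib]
      map_smul' := by
        intro r x
        simp [Finset.mul_sum, mul_left_comm] } with hL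
  have hLval : ∀ x, L x = ∑ u, θ u * x u := fun x => rfl
  have hLsingle : ∀ a, L (chi G a) = θ a := by
    intro a
    rw [hLval, chi, Finset.sum_eq_single a]
    · rw [Pi.single_eq_same, mul_one]
    · intro b _ hb
      rw [Pi.single_eq_of_ne hb, mul_zero]
    · intro ha
      exact absurd (Finset.mem_univ a) ha
  have hLw : ∀ e : G.H, G.edge e ∉ F → L (wvec G σ e) = 0 := by
    intro e he
    rw [wvec, map_sub, map_smul, hLsingle, hLsingle, smul_eq_mul, horth e he, sub_self]
  have hker : span ℚ (phi G σ '' {e | e ∉ F}) ≤ LinearMap.ker L := by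
    rw [span_le]
    rintro x ⟨e, he, rfl⟩
    rw [Set.mem_setOf_eq] at he
    have h1 : G.edge (rep G e) ∉ F := by rw [edge_rep]; exact he
    exact LinearMap.mem_ker.mpr (hLw _ h1)
  rw [hspan] at hker
  have hLθ : L θ = 0 := LinearMap.mem_ker.mp (hker Submodule.mem_top)
  rw [hLval] at hLθ
  have hzero := (Finset.sum_eq_zero_iff_of_nonneg
    (fun u _ => mul_self_nonneg (θ u))).mp hLθ v (Finset.mem_univ v)
  rw [hθv] at hzero
  norm_num at hzero

lemma delUnbal_iff_span : G.DelUnbal σ F ↔ span ℚ (phi G σ '' {e | e ∉ F}) = ⊤ :=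
  ⟨span_top_of_delUnbal G σ F, delUnbal_of_span_top G σ F⟩

lemma finrank_span_le (X : Finset G.Edge) :
    finrank ℚ (span ℚ (phi G σ '' (↑X : Set G.Edge))) ≤ X.card := by
  have h1 : phi G σ '' (↑X : Set G.Edge) = ↑(X.image (phi G σ)) := by
    rw [Finset.coe_image]
  rw [h1]
  exact le_trans (finrank_span_finset_le_card _) Finset.card_image_le

lemma finrank_step (D : Finset G.Edge) : ∀ S : Finset G.Edge, Disjoint S D →
    (∀ e ∈ D, phi G σ e ∉ span ℚ (phi G σ '' ((↑(S ∪ D) : Set G.Edge) \ {e}))) →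
    finrank ℚ (span ℚ (phi G σ '' (↑S : Set G.Edge))) + D.card
      ≤ finrank ℚ (span ℚ (phi G σ '' (↑(S ∪ D) : Set G.Edge))) := by
  classical
  induction D using Finset.induction_on with
  | empty =>
    intro S _ _
    rw [Finset.union_empty]
    simp
  | @insert a D' ha ih =>
    intro S hdisj hess
    have haS : a ∉ S := by
      intro hc
      exact (Finset.disjoint_left.mp hdisj hc) (Finset.mem_insert_self a D')
    have hdisj' : Disjoint S D' := by
      apply Finset.disjoint_left.mpr
      intro x hx hxD
      exact Finset.disjoint_left.mp hdisj hx (Finset.mem_insert_of_mem hxD)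
    have hfin : (S ∪ insert a D').erase a = S ∪ D' := by
      ext x
      simp only [Finset.mem_erase, Finset.mem_union, Finset.mem_insert]
      constructor
      · rintro ⟨hne, hx | (rfl | hx)⟩
        · exact Or.inl hx
        · exact absurd rfl hne
        · exact Or.inr hx
      · intro hx
        rcases hx with hx | hx
        · exact ⟨fun h => haS (h ▸ hx), Or.inl hx⟩
        · exact ⟨fun h => ha (h ▸ hx), Or.inr (Or.inr hx)⟩
    have hsetreq : (↑(S ∪ insert a D') : Set G.Edge) \ {a} = ↑(S ∪ D') := by
      rw [← Finset.coe_erase, hfin]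
    have hsub0 : (↑(S ∪ D') : Set G.Edge) ⊆ ↑(S ∪ insert a D') :=
      Finset.coe_subset.mpr (Finset.union_subset_union_right (Finset.subset_insert a D'))
    have hle : span ℚ (phi G σ '' (↑(S ∪ D') : Set G.Edge))
        ≤ span ℚ (phi G σ '' (↑(S ∪ insert a D') : Set G.Edge)) :=
      span_mono (Set.image_mono hsub0)
    have hmema : phi G σ a ∈ span ℚ (phi G σ '' (↑(S ∪ insert a D') : Set G.Edge)) :=
      subset_span ⟨a, by simp, rfl⟩
    have hnmem : phi G σ a ∉ span ℚ (phi G σ '' (↑(S ∪ D') : Set G.Edge)) := by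
      rw [← hsetreq]
      exact hess a (Finset.mem_insert_self a D')
    have hlt : span ℚ (phi G σ '' (↑(S ∪ D') : Set G.Edge))
        < span ℚ (phi G σ '' (↑(S ∪ insert a D') : Set G.Edge)) :=
      lt_of_le_of_ne hle (fun heq => hnmem (by rw [heq]; exact hmema))
    have hfr := Submodule.finrank_lt_finrank_of_lt hlt
    have hIH := ih S hdisj' (fun e he hmem =>
      hess e (Finset.mem_insert_of_mem he)
        (span_mono (Set.image_mono (Set.diff_subset_diff_left hsub0)) hmem))
    rw [Finset.card_insert_of_notMem ha]
    omega

end SignedAux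

/-- **Statement 14.** For a connected unbalanced signed graph `(G, σ)`, the edge sets `F` such
that every connected component of `G ∖ F` is unbalanced form the independent sets of a matroid
on `E(G)`, of rank `|E(G)| − |V(G)|`: the empty set is independent, independence is closed under
taking subsets, the exchange axiom holds, and every maximal independent set has cardinality
`|E(G)| − |V(G)|`. -/
theorem signed_cographic_matroid (G : HGraph) (σ : G.Edge → ZMod 2)
    (hconn : G.Connected) (hunbal : G.Unbal σ) :
    G.DelUnbal σ ∅ ∧
    (∀ F F' : Finset G.Edge, F ⊆ F' → G.DelUnbal σ F' → G.DelUnbal σ F) ∧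
    (∀ F F' : Finset G.Edge, G.DelUnbal σ F → G.DelUnbal σ F' → F.card < F'.card →
      ∃ e ∈ F' \ F, G.DelUnbal σ (insert e F)) ∧
    (∀ F : Finset G.Edge, G.DelUnbal σ F →
      (∀ e ∉ F, ¬ G.DelUnbal σ (insert e F)) →
      F.card = Fintype.card G.Edge - Fintype.card G.V) := by
  classical
  open Submodule Module in
  have hins : ∀ (F : Finset G.Edge) (e : G.Edge),
      {x : G.Edge | x ∉ insert e F} = {x : G.Edge | x ∉ F} \ {e} := by
    intro F e
    ext x
    simp only [Set.mem_setOf_eq, Finset.mem_insert, Set.mem_diff, Set.mem_singleton_iff]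
    tauto
  have hcoe : ∀ F : Finset G.Edge, (↑(Fᶜ) : Set G.Edge) = {x : G.Edge | x ∉ F} := by
    intro F
    ext x
    simp
  refine ⟨?_, ?_, ?_, ?_⟩
  · -- the empty set is independent
    intro v
    obtain ⟨n, c, hc, hs⟩ := hunbal
    refine ⟨n, c, ⟨fun i => ?_, hc.2.1, hc.2.2.1, hc.2.2.2⟩, hs, ?_⟩
    · simp
    · refine Relation.ReflTransGen.mono ?_ _ _ (hconn.2 v (G.root (c 0)))
      rintro a b ⟨h, _, h1, h2⟩
      exact ⟨h, by simp, h1, h2⟩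
  · -- subsets of independent sets are independent
    intro F F' hFF' h v
    obtain ⟨n, c, hc, hs, hr⟩ := h v
    refine ⟨n, c, ⟨fun i hmem => hc.1 i (hFF' hmem), hc.2.1, hc.2.2.1, hc.2.2.2⟩, hs, ?_⟩
    refine Relation.ReflTransGen.mono ?_ _ _ hr
    rintro a b ⟨h', hmem, h1, h2⟩
    refine ⟨h', ?_, h1, h2⟩
    simp only [Finset.mem_compl] at hmem ⊢
    exact fun hf => hmem (hFF' hf)
  · -- exchange
    intro F F' hF hF' hlt
    by_contra hcon
    push_neg at hcon
    have hsF := (delUnbal_iff_span G σ F).mp hF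
    have hsF' := (delUnbal_iff_span G σ F').mp hF'
    have hDsub : F' \ F ⊆ Fᶜ := by
      intro x hx
      simp only [Finset.mem_sdiff] at hx
      simpa [Finset.mem_compl] using hx.2
    have hset1 : (Fᶜ \ (F' \ F)) ∪ (F' \ F) = Fᶜ := Finset.sdiff_union_of_subset hDsub
    have hess : ∀ e ∈ F' \ F, phi G σ e ∉
        span ℚ (phi G σ '' ((↑((Fᶜ \ (F' \ F)) ∪ (F' \ F)) : Set G.Edge) \ {e})) := by
      intro e he hmem
      rw [hset1, hcoe] at hmem
      apply hcon e he
      rw [delUnbal_iff_span, hins, eq_top_iff, ← hsF]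
      apply span_le.mpr
      rintro x ⟨a, ha, rfl⟩
      rw [Set.mem_setOf_eq] at ha
      by_cases hae : a = e
      · subst hae
        exact hmem
      · exact subset_span ⟨a, ⟨ha, hae⟩, rfl⟩
    have hstep := finrank_step G σ (F' \ F) (Fᶜ \ (F' \ F)) Finset.sdiff_disjoint hess
    rw [hset1, hcoe, hsF] at hstep
    have hsub : F'ᶜ ⊆ (Fᶜ \ (F' \ F)) ∪ (F \ F') := by
      intro x hx
      simp only [Finset.mem_compl] at hx
      simp only [Finset.mem_union, Finset.mem_sdiff, Finset.mem_compl]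
      by_cases hxF : x ∈ F
      · exact Or.inr ⟨hxF, hx⟩
      · exact Or.inl ⟨hxF, fun hm => hx hm.1⟩
    have htop2 : span ℚ (phi G σ '' (↑(Fᶜ \ (F' \ F)) : Set G.Edge))
        ⊔ span ℚ (phi G σ '' (↑(F \ F') : Set G.Edge)) = ⊤ := by
      rw [eq_top_iff]
      rw [← hcoe F'] at hsF'
      rw [← hsF', ← Submodule.span_union, ← Set.image_union, ← Finset.coe_union]
      exact span_mono (Set.image_mono (Finset.coe_subset.mpr hsub))
    have hrank2 : finrank ℚ (⊤ : Submodule ℚ (G.V → ℚ))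
        ≤ finrank ℚ (span ℚ (phi G σ '' (↑(Fᶜ \ (F' \ F)) : Set G.Edge))) + (F \ F').card := by
      rw [← htop2]
      exact le_trans (Submodule.finrank_add_le_finrank_add_finrank _ _)
        (Nat.add_le_add (le_refl _) (finrank_span_le G σ _))
    have h1 := Finset.card_sdiff_add_card_inter F' F
    have h2 := Finset.card_sdiff_add_card_inter F F'
    rw [Finset.inter_comm] at h1
    omega
  · -- rank
    intro F hF hmax
    have hsF := (delUnbal_iff_span G σ F).mp hF
    have hess : ∀ e ∈ Fᶜ, phi G σ e ∉
        span ℚ (phi G σ '' ((↑((∅ ∪ Fᶜ) : Finset G.Edge) : Set G.Edge) \ {e})) := by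
      intro e he hmem
      rw [Finset.empty_union, hcoe] at hmem
      apply hmax e (Finset.mem_compl.mp he)
      rw [delUnbal_iff_span, hins, eq_top_iff, ← hsF]
      apply span_le.mpr
      rintro x ⟨a, ha, rfl⟩
      rw [Set.mem_setOf_eq] at ha
      by_cases hae : a = e
      · subst hae
        exact hmem
      · exact subset_span ⟨a, ⟨ha, hae⟩, rfl⟩
    have hstep := finrank_step G σ Fᶜ ∅ (by simp) hess
    rw [Finset.empty_union, hcoe, hsF] at hstep
    have h0 : finrank ℚ (span ℚ (phi G σ '' (↑(∅ : Finset G.Edge) : Set G.Edge))) = 0 := by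
      simp
    rw [h0, zero_add] at hstep
    have hle : finrank ℚ (⊤ : Submodule ℚ (G.V → ℚ)) ≤ Fᶜ.card := by
      rw [← hsF, ← hcoe]
      exact finrank_span_le G σ Fᶜ
    have htoprank : finrank ℚ (⊤ : Submodule ℚ (G.V → ℚ)) = Fintype.card G.V := by
      rw [finrank_top, Module.finrank_pi]
    have hcompl := Finset.card_compl F
    have hFle : F.card ≤ Fintype.card G.Edge := Finset.card_le_univ F
    omega
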